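/- arXiv:2602.23001 — 3 statements merged into one kernel-verified Lean document; each statement's English description precedes it below -/
import Mathlib

section
/- Let q > 0. Then there exists a constant c ≡ c(q) ≥ 1 such that for all a, b ∈ ℝ and for both choices of sign: c^{−1} (|a| + |b|)^{q−1} (a−b)_±² ≤ 𝔤_±(a,b) ≤ c (|a| + |b|)^{q−1} (a−b)_±². -/
open MeasureTheory intervalIntegral Set Real
open scoped NNReal

noncomputable section

/-- `𝔤₊(a,b) := q ∫_b^a |t|^{q-1} (t-b)₊ dt` (oriented integral). -/
def gPlus (q a b : ℝ) : ℝ := q * ∫ t in b..a, |t| ^ (q - 1) * max (t - b) 0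

/-- `𝔤₋(a,b) := -q ∫_b^a |t|^{q-1} (t-b)₋ dt` (oriented integral). -/
def gMinus (q a b : ℝ) : ℝ := -(q * ∫ t in b..a, |t| ^ (q - 1) * max (b - t) 0)

/-- Real subadditivity of rpow for 0 ≤ p ≤ 1. -/
lemma rpow_add_le_add_rpow' {p : ℝ} (x y : ℝ) (hx : 0 ≤ x) (hy : 0 ≤ y)
    (hp : 0 ≤ p) (hp1 : p ≤ 1) : (x + y) ^ p ≤ x ^ p + y ^ p := by
  have h := NNReal.rpow_add_le_add_rpow x.toNNReal y.toNNReal hp hp1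
  have h2 := NNReal.coe_le_coe.2 h
  push_cast [NNReal.coe_rpow] at h2
  rwa [Real.coe_toNNReal x hx, Real.coe_toNNReal y hy] at h2

lemma intervalIntegrable_abs_rpow {r : ℝ} (hr : -1 < r) (x y : ℝ) :
    IntervalIntegrable (fun t => |t| ^ r) volume x y := by
  have key : ∀ z : ℝ, IntervalIntegrable (fun t => |t| ^ r) volume 0 z := by
    have pos : ∀ z : ℝ, 0 ≤ z → IntervalIntegrable (fun t => |t| ^ r) volume 0 z := by
      intro z hz
      have h := intervalIntegrable_rpow' (a := 0) (b := z) hr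
      rw [intervalIntegrable_iff] at h ⊢
      refine h.congr_fun ?_ measurableSet_uIoc
      intro t ht
      rw [uIoc_of_le hz] at ht
      show t ^ r = |t| ^ r
      rw [abs_of_nonneg ht.1.le]
    intro z
    rcases le_total 0 z with hz | hz
    · exact pos z hz
    · rw [IntervalIntegrable.iff_comp_neg]
      simp only [abs_neg, neg_zero]
      exact pos (-z) (by linarith)
  exact (key x).symm.trans (key y)

lemma integrand_integrable {q : ℝ} (hq : 0 < q) (b x y : ℝ) :
    IntervalIntegrable (fun t => |t| ^ (q - 1) * max (t - b) 0) volume x y :=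
  (intervalIntegrable_abs_rpow (by linarith) x y).mul_continuousOn
    (Continuous.continuousOn (by continuity))

lemma integrand_nonneg {q b : ℝ} (t : ℝ) : 0 ≤ |t| ^ (q - 1) * max (t - b) 0 :=
  mul_nonneg (Real.rpow_nonneg (abs_nonneg t) _) (le_max_right _ _)

lemma gPlus_of_le {q a b : ℝ} (h : a ≤ b) : gPlus q a b = 0 := by
  unfold gPlus
  have : EqOn (fun t => |t| ^ (q - 1) * max (t - b) 0) (fun _ => (0:ℝ)) (uIcc b a) := by
    intro t ht
    rw [uIcc_of_ge h] at ht
    simp only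
    rw [max_eq_right (by linarith [ht.2] : t - b ≤ 0), mul_zero]
  rw [intervalIntegral.integral_congr this, intervalIntegral.integral_const]
  simp

lemma gMinus_eq (q a b : ℝ) : gMinus q a b = gPlus q (-a) (-b) := by
  unfold gMinus gPlus
  have : (∫ t in (-b)..(-a), |t| ^ (q - 1) * max (t - -b) 0)
      = ∫ t in a..b, |t| ^ (q - 1) * max (b - t) 0 := by
    rw [← intervalIntegral.integral_comp_neg (fun t => |t| ^ (q - 1) * max (t - -b) 0)]
    congr 1
    ext t
    rw [abs_neg]
    ring_nf
  rw [this, intervalIntegral.integral_symm a b]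
  ring

-- J0
lemma int_abs_rpow_right {q : ℝ} (hq : 0 < q) {x : ℝ} (hx : 0 ≤ x) :
    ∫ t in (0:ℝ)..x, |t| ^ (q - 1) = x ^ q / q := by
  have : EqOn (fun t : ℝ => |t| ^ (q - 1)) (fun t : ℝ => t ^ (q - 1)) (uIcc 0 x) := by
    intro t ht
    rw [uIcc_of_le hx] at ht
    show |t| ^ (q-1) = t ^ (q-1)
    rw [abs_of_nonneg ht.1]
  rw [intervalIntegral.integral_congr this, integral_rpow (Or.inl (by linarith))]
  rw [Real.zero_rpow (by linarith : q - 1 + 1 ≠ 0)]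
  norm_num [show q - 1 + 1 = q by ring]

-- J1
lemma int_abs_rpow_left {q : ℝ} (hq : 0 < q) {x : ℝ} (hx : x ≤ 0) :
    ∫ t in x..(0:ℝ), |t| ^ (q - 1) = (-x) ^ q / q := by
  have := intervalIntegral.integral_comp_neg (a := 0) (b := -x) (fun t : ℝ => |t| ^ (q - 1))
  simp only [abs_neg, neg_neg, neg_zero] at this
  rw [← this, int_abs_rpow_right hq (by linarith : (0:ℝ) ≤ -x)]

-- integral of (t - b)
lemma int_sub_const (a b : ℝ) : ∫ t in b..a, (t - b) = (a - b) ^ 2 / 2 := by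
  have := intervalIntegral.integral_comp_sub_right (a := b) (b := a) (fun t : ℝ => t) b
  rw [this, integral_id]
  simp

-- J : total bound on ∫ |t|^(q-1) for 0 < q ≤ 1
lemma int_abs_rpow_le {q : ℝ} (hq : 0 < q) (hq1 : q ≤ 1) {a b : ℝ} (hab : b ≤ a) :
    ∫ t in b..a, |t| ^ (q - 1) ≤ 2 * (a - b) ^ q / q := by
  have hr : (-1:ℝ) < q - 1 := by linarith
  have hD : (0:ℝ) ≤ a - b := by linarith
  have key : ∀ x y : ℝ, x ≤ y → (∫ t in x..y, |t| ^ (q - 1))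
      = (∫ t in (0:ℝ)..y, |t| ^ (q-1)) - ∫ t in (0:ℝ)..x, |t| ^ (q-1) := by
    intro x y _
    rw [← intervalIntegral.integral_interval_sub_left
      (intervalIntegrable_abs_rpow hr 0 y) (intervalIntegrable_abs_rpow hr 0 x)]
  rcases le_or_gt 0 b with hb | hb
  · -- 0 ≤ b ≤ a
    rw [key b a hab, int_abs_rpow_right hq (by linarith), int_abs_rpow_right hq hb]
    have sub : a ^ q ≤ (a - b) ^ q + b ^ q := by
      have := rpow_add_le_add_rpow' (a - b) b hD hb hq.le hq1
      simpa [show a - b + b = a by ring] using this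
    rw [div_sub_div_same, div_le_div_iff₀ hq (by positivity)]
    have h2 : a ^ q - b ^ q ≤ (a - b) ^ q := by linarith
    nlinarith [Real.rpow_nonneg hD q]
  · rcases le_or_gt a 0 with ha | ha
    · -- b ≤ a ≤ 0
      have hcn := intervalIntegral.integral_comp_neg (a := -a) (b := -b)
        (fun t : ℝ => |t| ^ (q - 1))
      simp only [abs_neg, neg_neg] at hcn
      rw [← hcn, key (-a) (-b) (by linarith), int_abs_rpow_right hq (by linarith),
        int_abs_rpow_right hq (by linarith)]
      have sub : (-b) ^ q ≤ (a - b) ^ q + (-a) ^ q := by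
        have := rpow_add_le_add_rpow' (a - b) (-a) hD (by linarith) hq.le hq1
        simpa [show a - b + -a = -b by ring] using this
      rw [div_sub_div_same, div_le_div_iff₀ hq (by positivity)]
      nlinarith [Real.rpow_nonneg hD q, Real.rpow_nonneg (by linarith : (0:ℝ) ≤ -a) q]
    · -- b < 0 < a
      have hsplit : (∫ t in b..a, |t| ^ (q - 1))
          = (∫ t in b..(0:ℝ), |t| ^ (q-1)) + ∫ t in (0:ℝ)..a, |t| ^ (q-1) := by
        rw [intervalIntegral.integral_add_adjacent_intervals
          (intervalIntegrable_abs_rpow hr b 0) (intervalIntegrable_abs_rpow hr 0 a)]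
      rw [hsplit, int_abs_rpow_left hq hb.le, int_abs_rpow_right hq ha.le]
      have h1 : (-b) ^ q ≤ (a - b) ^ q :=
        Real.rpow_le_rpow (by linarith) (by linarith) hq.le
      have h2 : a ^ q ≤ (a - b) ^ q :=
        Real.rpow_le_rpow (by linarith) (by linarith) hq.le
      rw [← add_div, div_le_div_iff₀ hq hq]
      nlinarith
lemma helper_div_rpow {M c : ℝ} (hM : 0 ≤ M) (hc : 0 < c) (r : ℝ) :
    (M / c) ^ r = c ^ (-r) * M ^ r := by
  rw [Real.div_rpow hM hc.le, Real.rpow_neg hc.le, div_eq_mul_inv, mul_comm]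

lemma subinterval {a b : ℝ} (hab : b < a) :
    ∃ c d : ℝ, b ≤ c ∧ d ≤ a ∧ (a - b) / 16 ≤ d - c ∧
      ∀ t ∈ Icc c d, (|a| + |b|) / 8 ≤ |t| ∧ |t| ≤ |a| + |b| ∧ (a - b) / 16 ≤ t - b := by
  have hD : 0 < a - b := by linarith
  have ha1 := le_abs_self a
  have ha2 := neg_abs_le a
  have hb1 := le_abs_self b
  have hb2 := neg_abs_le b
  have hDM : a - b ≤ |a| + |b| := by linarith
  have hM : 0 < |a| + |b| := lt_of_lt_of_le hD hDM
  rcases le_or_gt ((|a| + |b|) / 4) |a| with h4 | h4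
  · refine ⟨a - (a - b) / 8, a - (a - b) / 16, by linarith, by linarith, by linarith, ?_⟩
    intro t ht
    obtain ⟨ht1, ht2⟩ := ht
    have habs : |a| - |t| ≤ a - t := by
      have h := abs_sub_abs_le_abs_sub a t
      rwa [abs_of_nonneg (by linarith : (0:ℝ) ≤ a - t)] at h
    refine ⟨by linarith, abs_le.mpr ⟨by linarith, by linarith⟩, by linarith⟩
  · have hbneg : b < -(3 * (|a| + |b|)) / 4 := by
      rcases abs_cases b with ⟨h1, _⟩ | ⟨h1, _⟩ <;> linarith
    have hDlb : (|a| + |b|) / 2 < a - b := by linarith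
    refine ⟨b + (|a| + |b|) / 4, b + (|a| + |b|) / 2, by linarith, by linarith, by linarith, ?_⟩
    intro t ht
    obtain ⟨ht1, ht2⟩ := ht
    have htneg : t ≤ -((|a| + |b|) / 4) := by linarith
    refine ⟨?_, abs_le.mpr ⟨by linarith, by linarith⟩, by linarith⟩
    have ht0 : |t| = -t := abs_of_nonpos (by linarith)
    rw [ht0]
    linarith

lemma gPlus_lower {q : ℝ} (hq : 0 < q) {a b : ℝ} (hab : b < a) :
    q * min ((8:ℝ) ^ (1 - q)) 1 / 256 * (|a| + |b|) ^ (q - 1) * (a - b) ^ 2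
      ≤ gPlus q a b := by
  obtain ⟨c, d, hbc, hda, hdc, hIcc⟩ := subinterval hab
  have hD : 0 < a - b := by linarith
  have hDM : a - b ≤ |a| + |b| := by
    have := le_abs_self a; have := neg_abs_le b; linarith
  have hM : 0 < |a| + |b| := lt_of_lt_of_le hD hDM
  set M := |a| + |b| with hMdef
  set D := a - b with hDdef
  set κ := min ((8:ℝ) ^ (1 - q)) 1 with hκdef
  have hκpos : 0 < κ := lt_min (Real.rpow_pos_of_pos (by norm_num) _) one_pos
  set K := κ * M ^ (q - 1) * (D / 16) with hKdef
  have hMq : (0:ℝ) ≤ M ^ (q - 1) := Real.rpow_nonneg hM.le _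
  have hKpos : 0 ≤ K := mul_nonneg (mul_nonneg hκpos.le hMq) (by linarith)
  have hcd : c ≤ d := by linarith
  have hpt : ∀ t ∈ Icc c d, K ≤ |t| ^ (q - 1) * max (t - b) 0 := by
    intro t ht
    obtain ⟨h1, h2, h3⟩ := hIcc t ht
    have htpos : 0 < |t| := lt_of_lt_of_le (by positivity) h1
    have hbase : κ * M ^ (q - 1) ≤ |t| ^ (q - 1) := by
      rcases le_or_gt 1 q with hq1 | hq1
      · have e1 : κ ≤ 8 ^ (1 - q) := min_le_left _ _
        have e2 : (M / 8) ^ (q - 1) ≤ |t| ^ (q - 1) :=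
          Real.rpow_le_rpow (by positivity) h1 (by linarith)
        have e3 : (M / 8 : ℝ) ^ (q - 1) = 8 ^ (1 - q) * M ^ (q - 1) := by
          rw [helper_div_rpow hM.le (by norm_num : (0:ℝ) < 8) (q - 1),
            show -(q - 1) = 1 - q by ring]
        calc κ * M ^ (q - 1) ≤ 8 ^ (1 - q) * M ^ (q - 1) :=
              mul_le_mul_of_nonneg_right e1 hMq
          _ = (M / 8) ^ (q - 1) := e3.symm
          _ ≤ |t| ^ (q - 1) := e2
      · have e1 : κ ≤ 1 := min_le_right _ _
        have e2 : M ^ (q - 1) ≤ |t| ^ (q - 1) :=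
          Real.rpow_le_rpow_of_nonpos htpos h2 (by linarith)
        calc κ * M ^ (q - 1) ≤ 1 * M ^ (q - 1) := mul_le_mul_of_nonneg_right e1 hMq
          _ = M ^ (q - 1) := one_mul _
          _ ≤ |t| ^ (q - 1) := e2
    rw [max_eq_left (by linarith : (0:ℝ) ≤ t - b), hKdef]
    exact mul_le_mul hbase (by linarith) (by linarith)
      (Real.rpow_nonneg (abs_nonneg t) _)
  have hint1 : (d - c) * K ≤ ∫ t in c..d, |t| ^ (q - 1) * max (t - b) 0 := by
    have h := intervalIntegral.integral_mono_on hcd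
      (_root_.intervalIntegrable_const (c := K)) (integrand_integrable hq b c d) hpt
    rwa [intervalIntegral.integral_const, smul_eq_mul] at h
  have hs1 := intervalIntegral.integral_add_adjacent_intervals
    (integrand_integrable hq b b c) (integrand_integrable hq b c d)
  have hs2 := intervalIntegral.integral_add_adjacent_intervals
    (integrand_integrable hq b b d) (integrand_integrable hq b d a)
  have hnn1 : 0 ≤ ∫ t in b..c, |t| ^ (q - 1) * max (t - b) 0 :=
    intervalIntegral.integral_nonneg hbc fun u _ => integrand_nonneg u
  have hnn3 : 0 ≤ ∫ t in d..a, |t| ^ (q - 1) * max (t - b) 0 :=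
    intervalIntegral.integral_nonneg hda fun u _ => integrand_nonneg u
  have hmain : (d - c) * K ≤ ∫ t in b..a, |t| ^ (q - 1) * max (t - b) 0 := by
    linarith
  have h2 : D / 16 * K ≤ (d - c) * K := mul_le_mul_of_nonneg_right hdc hKpos
  unfold gPlus
  calc q * κ / 256 * M ^ (q - 1) * D ^ 2 = q * (D / 16 * K) := by rw [hKdef]; ring
    _ ≤ q * ((d - c) * K) := mul_le_mul_of_nonneg_left h2 hq.le
    _ ≤ q * ∫ t in b..a, |t| ^ (q - 1) * max (t - b) 0 :=
        mul_le_mul_of_nonneg_left hmain hq.le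
lemma gPlus_upper {q : ℝ} (hq : 0 < q) {a b : ℝ} (hab : b < a) :
    gPlus q a b ≤ (q / 2 + 2 * 4 ^ (1 - q) + q / 2 * 4 ^ (1 - q))
      * (|a| + |b|) ^ (q - 1) * (a - b) ^ 2 := by
  have hD : 0 < a - b := by linarith
  have hDM : a - b ≤ |a| + |b| := by
    have := le_abs_self a; have := neg_abs_le b; linarith
  have hM : 0 < |a| + |b| := lt_of_lt_of_le hD hDM
  set M := |a| + |b| with hMdef
  set D := a - b with hDdef
  have hMq : (0:ℝ) ≤ M ^ (q - 1) := Real.rpow_nonneg hM.le _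
  have hX : (0:ℝ) ≤ M ^ (q - 1) * D ^ 2 := mul_nonneg hMq (sq_nonneg _)
  have h4pos : (0:ℝ) < 4 ^ (1 - q) := Real.rpow_pos_of_pos (by norm_num) _
  -- reduce to a single-piece bound
  have reduce : ∀ B : ℝ, 0 ≤ B → gPlus q a b ≤ B * (M ^ (q - 1) * D ^ 2) →
      B ≤ q / 2 + 2 * 4 ^ (1 - q) + q / 2 * 4 ^ (1 - q) →
      gPlus q a b ≤ (q / 2 + 2 * 4 ^ (1 - q) + q / 2 * 4 ^ (1 - q)) * M ^ (q - 1) * D ^ 2 := by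
    intro B _ h1 h2
    calc gPlus q a b ≤ B * (M ^ (q - 1) * D ^ 2) := h1
      _ ≤ (q / 2 + 2 * 4 ^ (1 - q) + q / 2 * 4 ^ (1 - q)) * (M ^ (q - 1) * D ^ 2) :=
          mul_le_mul_of_nonneg_right h2 hX
      _ = (q / 2 + 2 * 4 ^ (1 - q) + q / 2 * 4 ^ (1 - q)) * M ^ (q - 1) * D ^ 2 := by ring
  have habs_le : ∀ t ∈ Icc b a, |t| ≤ M := by
    intro t ht
    have := le_abs_self a; have := neg_abs_le b
    have := abs_nonneg a; have := abs_nonneg b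
    exact abs_le.mpr ⟨by linarith [ht.1], by linarith [ht.2]⟩
  rcases le_or_gt 1 q with hq1 | hq1
  · -- q ≥ 1
    refine reduce (q / 2) (by linarith) ?_ (by nlinarith)
    have hpt : ∀ t ∈ Icc b a, |t| ^ (q - 1) * max (t - b) 0 ≤ M ^ (q - 1) * (t - b) := by
      intro t ht
      rw [max_eq_left (by linarith [ht.1] : (0:ℝ) ≤ t - b)]
      exact mul_le_mul_of_nonneg_right
        (Real.rpow_le_rpow (abs_nonneg t) (habs_le t ht) (by linarith))
        (by linarith [ht.1])
    have hint : (∫ t in b..a, |t| ^ (q - 1) * max (t - b) 0)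
        ≤ ∫ t in b..a, M ^ (q - 1) * (t - b) := by
      refine intervalIntegral.integral_mono_on hab.le (integrand_integrable hq b b a) ?_ hpt
      exact (continuous_const.mul (continuous_id.sub continuous_const)).intervalIntegrable b a
    have hval : (∫ t in b..a, M ^ (q - 1) * (t - b)) = M ^ (q - 1) * (D ^ 2 / 2) := by
      rw [intervalIntegral.integral_const_mul, int_sub_const]
    unfold gPlus
    calc q * (∫ t in b..a, |t| ^ (q - 1) * max (t - b) 0)
        ≤ q * (M ^ (q - 1) * (D ^ 2 / 2)) := by
          rw [← hval]; exact mul_le_mul_of_nonneg_left hint hq.le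
      _ = q / 2 * (M ^ (q - 1) * D ^ 2) := by ring
  · rcases le_or_gt (4 * D) M with hcase | hcase
    · -- q < 1, 4D ≤ M : |t| ≥ M/4 on [b,a]
      refine reduce (q / 2 * 4 ^ (1 - q)) (by positivity) ?_ (by nlinarith)
      have habs_ge : ∀ t ∈ Icc b a, M / 4 ≤ |t| := by
        intro t ht
        rcases le_or_gt (M / 2) |a| with h | h
        · have h1 : |a| - |t| ≤ |a - t| := abs_sub_abs_le_abs_sub a t
          rw [abs_of_nonneg (by linarith [ht.2] : (0:ℝ) ≤ a - t)] at h1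
          linarith [ht.1]
        · have hb2 : M / 2 ≤ |b| := by
            have : |a| + |b| = M := hMdef.symm
            linarith
          have h1 : |b| - |t| ≤ |b - t| := abs_sub_abs_le_abs_sub b t
          rw [show |b - t| = |t - b| from abs_sub_comm b t,
            abs_of_nonneg (by linarith [ht.1] : (0:ℝ) ≤ t - b)] at h1
          linarith [ht.2]
      have hpt : ∀ t ∈ Icc b a,
          |t| ^ (q - 1) * max (t - b) 0 ≤ (M / 4) ^ (q - 1) * (t - b) := by
        intro t ht
        rw [max_eq_left (by linarith [ht.1] : (0:ℝ) ≤ t - b)]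
        exact mul_le_mul_of_nonneg_right
          (Real.rpow_le_rpow_of_nonpos (by linarith) (habs_ge t ht) (by linarith))
          (by linarith [ht.1])
      have hint : (∫ t in b..a, |t| ^ (q - 1) * max (t - b) 0)
          ≤ ∫ t in b..a, (M / 4) ^ (q - 1) * (t - b) := by
        refine intervalIntegral.integral_mono_on hab.le (integrand_integrable hq b b a) ?_ hpt
        exact (continuous_const.mul (continuous_id.sub continuous_const)).intervalIntegrable b a
      have hval : (∫ t in b..a, (M / 4) ^ (q - 1) * (t - b))
          = 4 ^ (1 - q) * M ^ (q - 1) * (D ^ 2 / 2) := by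
        rw [intervalIntegral.integral_const_mul, int_sub_const,
          helper_div_rpow hM.le (by norm_num : (0:ℝ) < 4) (q - 1),
          show -(q - 1) = 1 - q by ring]
      unfold gPlus
      calc q * (∫ t in b..a, |t| ^ (q - 1) * max (t - b) 0)
          ≤ q * (4 ^ (1 - q) * M ^ (q - 1) * (D ^ 2 / 2)) := by
            rw [← hval]; exact mul_le_mul_of_nonneg_left hint hq.le
        _ = q / 2 * 4 ^ (1 - q) * (M ^ (q - 1) * D ^ 2) := by ring
    · -- q < 1, M < 4D
      refine reduce (2 * 4 ^ (1 - q)) (by positivity) ?_ (by nlinarith)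
      have hpt : ∀ t ∈ Icc b a,
          |t| ^ (q - 1) * max (t - b) 0 ≤ |t| ^ (q - 1) * D := by
        intro t ht
        exact mul_le_mul_of_nonneg_left
          (max_le (by linarith [ht.2]) hD.le) (Real.rpow_nonneg (abs_nonneg t) _)
      have hint : (∫ t in b..a, |t| ^ (q - 1) * max (t - b) 0)
          ≤ ∫ t in b..a, |t| ^ (q - 1) * D := by
        refine intervalIntegral.integral_mono_on hab.le (integrand_integrable hq b b a) ?_ hpt
        exact (intervalIntegrable_abs_rpow (by linarith) b a).mul_const D
      have hval : (∫ t in b..a, |t| ^ (q - 1) * D)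
          = (∫ t in b..a, |t| ^ (q - 1)) * D := intervalIntegral.integral_mul_const D _
      have hint2 : (∫ t in b..a, |t| ^ (q - 1)) * D ≤ 2 * D ^ q / q * D :=
        mul_le_mul_of_nonneg_right (int_abs_rpow_le hq hq1.le hab.le) hD.le
      have hrw : q * (2 * D ^ q / q * D) = 2 * (D ^ (q - 1) * D ^ 2) := by
        have : D ^ q = D ^ (q - 1) * D := by
          calc D ^ q = D ^ (q - 1 + 1) := by norm_num
            _ = D ^ (q - 1) * D ^ (1:ℝ) := Real.rpow_add hD _ _
            _ = D ^ (q - 1) * D := by rw [Real.rpow_one]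
        rw [this]
        field_simp
      have hDle : D ^ (q - 1) ≤ 4 ^ (1 - q) * M ^ (q - 1) := by
        have h1 : (M / 4) ^ (q - 1) = 4 ^ (1 - q) * M ^ (q - 1) := by
          rw [helper_div_rpow hM.le (by norm_num : (0:ℝ) < 4) (q - 1),
            show -(q - 1) = 1 - q by ring]
        rw [← h1]
        exact Real.rpow_le_rpow_of_nonpos (by linarith) (by linarith) (by linarith)
      unfold gPlus
      calc q * (∫ t in b..a, |t| ^ (q - 1) * max (t - b) 0)
          ≤ q * (2 * D ^ q / q * D) := by
            refine mul_le_mul_of_nonneg_left ?_ hq.le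
            rw [← hval] at hint2
            exact le_trans hint hint2
        _ = 2 * (D ^ (q - 1) * D ^ 2) := hrw
        _ ≤ 2 * (4 ^ (1 - q) * M ^ (q - 1) * D ^ 2) := by nlinarith [sq_nonneg D]
        _ = 2 * 4 ^ (1 - q) * (M ^ (q - 1) * D ^ 2) := by ring

/-- for `q > 0` there is `c = c(q) ≥ 1` such that for all `a, b ∈ ℝ` and
both signs, `c⁻¹ (|a|+|b|)^{q-1} (a-b)_±² ≤ 𝔤_±(a,b) ≤ c (|a|+|b|)^{q-1} (a-b)_±²`. -/
theorem gPlus_gMinus_bounds (q : ℝ) (hq : 0 < q) :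
    ∃ c : ℝ, 1 ≤ c ∧ ∀ a b : ℝ,
      (c⁻¹ * (|a| + |b|) ^ (q - 1) * max (a - b) 0 ^ 2 ≤ gPlus q a b ∧
        gPlus q a b ≤ c * (|a| + |b|) ^ (q - 1) * max (a - b) 0 ^ 2) ∧
      (c⁻¹ * (|a| + |b|) ^ (q - 1) * max (b - a) 0 ^ 2 ≤ gMinus q a b ∧
        gMinus q a b ≤ c * (|a| + |b|) ^ (q - 1) * max (b - a) 0 ^ 2) := by
  set k1 := q * min ((8:ℝ) ^ (1 - q)) 1 / 256 with hk1def
  set k2 := q / 2 + 2 * (4:ℝ) ^ (1 - q) + q / 2 * (4:ℝ) ^ (1 - q) with hk2def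
  have hminpos : 0 < min ((8:ℝ) ^ (1 - q)) 1 :=
    lt_min (Real.rpow_pos_of_pos (by norm_num) _) one_pos
  have hk1 : 0 < k1 := div_pos (mul_pos hq hminpos) (by norm_num)
  set c := max (max k1⁻¹ k2) 1 with hcdef
  have hc1 : (1:ℝ) ≤ c := le_max_right _ _
  have hcpos : 0 < c := lt_of_lt_of_le one_pos hc1
  have hcinv : c⁻¹ ≤ k1 := by
    have h1 : k1⁻¹ ≤ c := le_trans (le_max_left _ _) (le_max_left _ _)
    have h2 := inv_anti₀ (inv_pos.mpr hk1) h1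
    rwa [inv_inv] at h2
  have hck2 : k2 ≤ c := le_trans (le_max_right k1⁻¹ k2) (le_max_left _ _)
  refine ⟨c, hc1, ?_⟩
  have key : ∀ a b : ℝ,
      c⁻¹ * (|a| + |b|) ^ (q - 1) * max (a - b) 0 ^ 2 ≤ gPlus q a b ∧
      gPlus q a b ≤ c * (|a| + |b|) ^ (q - 1) * max (a - b) 0 ^ 2 := by
    intro a b
    rcases le_or_gt a b with hab | hab
    · rw [gPlus_of_le hab, max_eq_right (by linarith : a - b ≤ 0)]
      norm_num
    · rw [max_eq_left (by linarith : (0:ℝ) ≤ a - b)]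
      have hMq : (0:ℝ) ≤ (|a| + |b|) ^ (q - 1) := Real.rpow_nonneg (by positivity) _
      constructor
      · have hlow := gPlus_lower hq hab
        rw [← hk1def] at hlow
        refine le_trans ?_ hlow
        exact mul_le_mul_of_nonneg_right
          (mul_le_mul_of_nonneg_right hcinv hMq) (sq_nonneg _)
      · have hup := gPlus_upper hq hab
        rw [← hk2def] at hup
        refine le_trans hup ?_
        exact mul_le_mul_of_nonneg_right
          (mul_le_mul_of_nonneg_right hck2 hMq) (sq_nonneg _)
  intro a b
  refine ⟨key a b, ?_⟩
  have h := key (-a) (-b)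
  rw [abs_neg, abs_neg, show -a - -b = b - a by ring] at h
  rw [gMinus_eq]
  exact h
end
end

section
/- Let q > 1. Then there exists a constant c ≡ c(q) > 0 such that for all real numbers k̃, k' with 0 ≤ k̃ ≤ k' and every u ∈ ℝ: 𝔤₊(u, k̃) ≥ c (u − k')₊^{q+1}. -/
noncomputable section

/-- for `q > 1` there is `c = c(q) > 0` such that for all
`0 ≤ k̃ ≤ k'` and all `u ∈ ℝ`, `𝔤₊(u, k̃) ≥ c (u - k')₊^{q+1}`. -/
theorem gPlus_lower_bound (q : ℝ) (hq : 1 < q) :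
    ∃ c : ℝ, 0 < c ∧ ∀ ktil k' u : ℝ, 0 ≤ ktil → ktil ≤ k' →
      c * max (u - k') 0 ^ (q + 1) ≤ gPlus q u ktil := by
  have hq0 : (0:ℝ) < q := by linarith
  have hq1 : (0:ℝ) < q + 1 := by linarith
  refine ⟨q / (q + 1), by positivity, ?_⟩
  intro ktil k' u hkt hkk
  have hcont : Continuous fun t : ℝ => |t| ^ (q - 1) * max (t - ktil) 0 := by
    apply Continuous.mul
    · refine continuous_iff_continuousAt.2 fun x => ?_
      exact (Real.continuousAt_rpow_const _ _ (Or.inr (by linarith))).comp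
        continuous_abs.continuousAt
    · exact (continuous_id.sub continuous_const).max continuous_const
  have hcont2 : Continuous fun t : ℝ => (t - ktil) ^ q := by
    refine continuous_iff_continuousAt.2 fun x => ?_
    exact (Real.continuousAt_rpow_const _ _ (Or.inr hq0.le)).comp
      (continuous_id.sub continuous_const).continuousAt
  rcases le_or_gt u ktil with hu | hu
  · have h1 : max (u - k') 0 = 0 := max_eq_right (by linarith)
    have h2 : gPlus q u ktil = 0 := by
      unfold gPlus
      rw [intervalIntegral.integral_congr (g := fun _ => (0:ℝ)) ?_,
        intervalIntegral.integral_zero, mul_zero]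
      intro t ht
      rw [Set.uIcc_of_ge hu] at ht
      have : t - ktil ≤ 0 := by linarith [ht.2]
      simp [max_eq_right this]
    rw [h1, h2, Real.zero_rpow (by linarith), mul_zero]
  · have key : (∫ t in ktil..u, (t - ktil) ^ q) ≤
        ∫ t in ktil..u, |t| ^ (q - 1) * max (t - ktil) 0 := by
      apply intervalIntegral.integral_mono_on hu.le
        (hcont2.intervalIntegrable _ _) (hcont.intervalIntegrable _ _)
      intro t ht
      have ht1 : ktil ≤ t := ht.1
      have h0t : 0 ≤ t := le_trans hkt ht1
      have h0 : 0 ≤ t - ktil := by linarith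
      rw [abs_of_nonneg h0t, max_eq_left h0]
      rcases eq_or_lt_of_le h0 with h | h
      · rw [← h, Real.zero_rpow (by linarith), mul_zero]
      · have : (t - ktil) ^ q = (t - ktil) ^ (q - 1) * (t - ktil) := by
          rw [← Real.rpow_add_one (ne_of_gt h)]
          ring_nf
        rw [this]
        exact mul_le_mul_of_nonneg_right
          (Real.rpow_le_rpow h0 (by linarith) (by linarith)) h0
    have hval : (∫ t in ktil..u, (t - ktil) ^ q) = (u - ktil) ^ (q + 1) / (q + 1) := by
      rw [intervalIntegral.integral_comp_sub_right (fun t => t ^ q) ktil,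
        integral_rpow (Or.inl (by linarith : (-1:ℝ) < q))]
      simp [Real.zero_rpow (by linarith : q + 1 ≠ 0)]
    have hmax : max (u - k') 0 ^ (q + 1) ≤ (u - ktil) ^ (q + 1) := by
      apply Real.rpow_le_rpow (le_max_right _ _) _ (by linarith)
      rcases le_or_gt u k' with h | h
      · rw [max_eq_right (by linarith)]; linarith
      · rw [max_eq_left (by linarith)]; linarith
    have : q / (q + 1) * max (u - k') 0 ^ (q + 1) ≤ q * ((u - ktil) ^ (q + 1) / (q + 1)) := by
      rw [div_mul_eq_mul_div, mul_div_assoc]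
      gcongr
    calc q / (q + 1) * max (u - k') 0 ^ (q + 1)
        ≤ q * ((u - ktil) ^ (q + 1) / (q + 1)) := this
      _ = q * ∫ t in ktil..u, (t - ktil) ^ q := by rw [hval]
      _ ≤ gPlus q u ktil := by
          unfold gPlus; exact mul_le_mul_of_nonneg_left key hq0.le
end
end

section
/- Let (a_n)_{n∈ℕ₀} be a bounded sequence of nonnegative real numbers, let b > 1, δ ∈ (0,1) with δ b < 1, and B ≥ 0, and suppose a_n ≤ δ a_{n+1} + B b^n for all n ∈ ℕ₀. Then a₀ ≤ B/(1 − δ b). -/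
/-- if a bounded sequence of nonnegative reals satisfies
`a_n ≤ δ a_{n+1} + B bⁿ` with `b > 1`, `δ ∈ (0,1)`, `δ b < 1`, `B ≥ 0`,
then `a₀ ≤ B/(1 - δ b)`. -/
theorem iterated_absorption (a : ℕ → ℝ) (hnn : ∀ n, 0 ≤ a n)
    (hbd : ∃ M : ℝ, ∀ n, a n ≤ M)
    (b δ B : ℝ) (hb : 1 < b) (hδ : δ ∈ Set.Ioo (0 : ℝ) 1) (hδb : δ * b < 1)
    (hB : 0 ≤ B)
    (hrec : ∀ n : ℕ, a n ≤ δ * a (n + 1) + B * b ^ n) :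
    a 0 ≤ B / (1 - δ * b) := by
  obtain ⟨M, hM⟩ := hbd
  obtain ⟨hδ0, hδ1⟩ := hδ
  have hM0 : 0 ≤ M := le_trans (hnn 0) (hM 0)
  have h1 : (0:ℝ) < 1 - δ * b := by linarith
  have key : ∀ n : ℕ, a 0 ≤ δ ^ n * a n + B * ∑ k ∈ Finset.range n, (δ * b) ^ k := by
    intro n
    induction n with
    | zero => simp
    | succ n ih =>
      calc a 0 ≤ δ ^ n * a n + B * ∑ k ∈ Finset.range n, (δ * b) ^ k := ih
        _ ≤ δ ^ n * (δ * a (n + 1) + B * b ^ n) + B * ∑ k ∈ Finset.range n, (δ * b) ^ k := by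
            have := hrec n
            have hp : (0:ℝ) ≤ δ ^ n := pow_nonneg hδ0.le n
            nlinarith [hrec n]
        _ = δ ^ (n + 1) * a (n + 1) + B * ∑ k ∈ Finset.range (n + 1), (δ * b) ^ k := by
            rw [Finset.sum_range_succ, mul_pow]; ring
  have hsum : ∀ n : ℕ, ∑ k ∈ Finset.range n, (δ * b) ^ k ≤ 1 / (1 - δ * b) := by
    intro n
    have h0 : 0 ≤ δ * b := by positivity
    have heq : ∑ k ∈ Finset.range n, (δ * b) ^ k = (1 - (δ*b)^n) / (1 - δ * b) := by
      rw [geom_sum_eq (by linarith)]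
      rw [div_eq_div_iff (by linarith) h1.ne']
      ring
    rw [heq]
    gcongr
    · linarith [pow_nonneg h0 n]
  -- combine and take limit
  have hle : ∀ n : ℕ, a 0 ≤ δ ^ n * M + B / (1 - δ * b) := by
    intro n
    calc a 0 ≤ δ ^ n * a n + B * ∑ k ∈ Finset.range n, (δ * b) ^ k := key n
      _ ≤ δ ^ n * M + B * (1 / (1 - δ * b)) := by
          have hp : (0:ℝ) ≤ δ ^ n := pow_nonneg hδ0.le n
          have h2 := hM n
          have h3 := hsum n
          nlinarith
      _ = δ ^ n * M + B / (1 - δ * b) := by ring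
  have htend : Filter.Tendsto (fun n : ℕ => δ ^ n * M + B / (1 - δ * b)) Filter.atTop
      (nhds (0 * M + B / (1 - δ * b))) := by
    exact (((tendsto_pow_atTop_nhds_zero_of_lt_one hδ0.le hδ1).mul_const M).add tendsto_const_nhds)
  rw [zero_mul, zero_add] at htend
  exact ge_of_tendsto' htend hle
end
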